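/- arXiv:2104.12940 — 3 statements merged into one kernel-verified Lean document; each statement's English description precedes it below -/
import Mathlib

section
/- There exists r₁ > 0 such that for every r ≥ r₁ and every y = (y′, y_N) ∈ ℝᴺ with |y − a_r| ≥ r/2 and y_N ≥ r/2, one has 1/2 ≤ ‖f_y‖_{L^p(ℝᴺ)} ≤ 3/2. -/
open MeasureTheory Filter Metric

noncomputable section

abbrev Euc (N : ℕ) := EuclideanSpace ℝ (Fin N)

/-- The last coordinate `x_N` of a point of `ℝ^N`. -/
def lastCoe (N : ℕ) (x : Euc N) : ℝ :=
  if h : 0 < N then x ⟨N - 1, Nat.sub_lt h one_pos⟩ else 0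

/-- The upper half space `ℝ₊ᴺ = {x : x_N > 0}`. -/
def upperHalf (N : ℕ) : Set (Euc N) := {x | 0 < lastCoe N x}

/-- The unit vector in the last coordinate direction. -/
def eVecN (N : ℕ) : Euc N :=
  if h : 0 < N then EuclideanSpace.single ⟨N - 1, Nat.sub_lt h one_pos⟩ (1 : ℝ) else 0

/-- The critical fractional Sobolev exponent `2*_s = 2N/(N-2s)`. -/
def twoStar (N : ℕ) (s : ℝ) : ℝ := 2 * N / (N - 2 * s)

/-- The Gagliardo kernel `|u x - u y|² / |x-y|^{N+2s}`. -/
def fracKernel (N : ℕ) (s : ℝ) (u : Euc N → ℝ) (q : Euc N × Euc N) : ℝ :=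
  (u q.1 - u q.2) ^ 2 / ‖q.1 - q.2‖ ^ ((N : ℝ) + 2 * s)

/-- The Gagliardo seminorm (squared) `E_s(u)`. -/
def Es (N : ℕ) (s : ℝ) (u : Euc N → ℝ) : ℝ := ∫ q : Euc N × Euc N, fracKernel N s u q

/-- Membership in the fractional Sobolev space `H^s(ℝᴺ)`. -/
def memHs (N : ℕ) (s : ℝ) (u : Euc N → ℝ) : Prop :=
  MemLp u 2 (volume : Measure (Euc N)) ∧
    Integrable (fracKernel N s u) (volume : Measure (Euc N × Euc N))

/-- Squared `H^s` norm: `‖u‖_s² = ‖u‖_{L²}² + E_s(u)`. -/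
def hsNormSq (N : ℕ) (s : ℝ) (u : Euc N → ℝ) : ℝ := (∫ x, (u x) ^ 2) + Es N s u

/-- `L^p` norm `(∫ |u|^p)^{1/p}`. -/
def lpNormP (N : ℕ) (p : ℝ) (u : Euc N → ℝ) : ℝ := (∫ x, |u x| ^ p) ^ (1 / p)

/-- The ground state level `M_∞`. -/
def MinftyC (N : ℕ) (s p : ℝ) : ℝ :=
  sInf {c | ∃ u : Euc N → ℝ, memHs N s u ∧ (∫ x, |u x| ^ p) = 1 ∧ c = hsNormSq N s u}

/-- Membership in `X₀^s(Ω)`: an `H^s` function vanishing a.e. outside `Ω`. -/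
def memX0 (N : ℕ) (s : ℝ) (Ω : Set (Euc N)) (u : Euc N → ℝ) : Prop :=
  memHs N s u ∧ ∀ᵐ x : Euc N, x ∉ Ω → u x = 0

/-- `Ω` is "the half space with a hole": an open set whose closure lies in the open upper
half space, with `ℝ₊ᴺ \ Ω ⊆ B_ρ(a_r) ⊆ ℝ₊ᴺ`. -/
structure IsHalfSpaceWithHole (N : ℕ) (ρ : ℝ) (ar : Euc N) (Ω : Set (Euc N)) : Prop where
  isOpen : IsOpen Ω
  closure_subset : closure Ω ⊆ upperHalf N
  hole_subset : upperHalf N \ Ω ⊆ ball ar ρ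
  ball_subset : ball ar ρ ⊆ upperHalf N

/-- The fractional Dirichlet bilinear form. -/
def fracForm (N : ℕ) (s : ℝ) (u v : Euc N → ℝ) : ℝ :=
  ∫ q : Euc N × Euc N, (u q.1 - u q.2) * (v q.1 - v q.2) / ‖q.1 - q.2‖ ^ ((N : ℝ) + 2 * s)

/-- Weak solution of `(-Δ)^s u + u = |u|^{p-2} u` in `Ω` (`Ω = univ` for the whole space). -/
def isWeakSolution (N : ℕ) (s p : ℝ) (Ω : Set (Euc N)) (u : Euc N → ℝ) : Prop :=
  memX0 N s Ω u ∧ ∀ v : Euc N → ℝ, memX0 N s Ω v →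
    fracForm N s u v + (∫ x, u x * v x) = ∫ x, |u x| ^ (p - 2) * u x * v x

/-- `χ(t) = 1` for `t ≤ 1` and `1/t` for `t ≥ 1`. -/
def chiFun (t : ℝ) : ℝ := if t ≤ 1 then 1 else 1 / t

/-- The barycenter-type map `β(u) = ∫ u(x)² χ(|x|) x dx`. -/
def betaMap (N : ℕ) (u : Euc N → ℝ) : Euc N := ∫ x : Euc N, ((u x) ^ 2 * chiFun ‖x‖) • x

/-- The smooth radial cutoff `ξ` relative to `ρ`. -/
def IsXiCutoff (ρ : ℝ) (ξ : ℝ → ℝ) : Prop :=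
  ContDiff ℝ (⊤ : ℕ∞) ξ ∧ (∀ t, 0 ≤ ξ t ∧ ξ t ≤ 1) ∧
    (∀ t, 0 ≤ t → t ≤ ρ → ξ t = 0) ∧ ∀ t, 2 * ρ ≤ t → ξ t = 1

/-- The smooth vertical cutoff `η`. -/
def IsEtaCutoff (η : ℝ → ℝ) : Prop :=
  ContDiff ℝ (⊤ : ℕ∞) η ∧ (∀ t, 0 ≤ η t ∧ η t ≤ 1) ∧
    (∀ t, t ≤ 0 → η t = 0) ∧ ∀ t, 1 ≤ t → η t = 1

/-- `φ` is a minimizer for `M_∞`. -/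
def isMinimizer (N : ℕ) (s p : ℝ) (φ : Euc N → ℝ) : Prop :=
  memHs N s φ ∧ (∫ x, |φ x| ^ p) = 1 ∧ hsNormSq N s φ = MinftyC N s p

/-- `f_y(x) = ξ(|x - a_r|) η(x_N) φ(x - y)`. -/
def cutFun (N : ℕ) (ξ η : ℝ → ℝ) (ar : Euc N) (φ : Euc N → ℝ) (y x : Euc N) : ℝ :=
  ξ ‖x - ar‖ * η (lastCoe N x) * φ (x - y)

/-- `Ψ_y = f_y / ‖f_y‖_{L^p}`. -/
def psiFun (N : ℕ) (p : ℝ) (ξ η : ℝ → ℝ) (ar : Euc N) (φ : Euc N → ℝ) (y : Euc N) :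
    Euc N → ℝ :=
  fun x => cutFun N ξ η ar φ y x / lpNormP N p (cutFun N ξ η ar φ y)

/-- The constrained level `c_r`. -/
def crVal (N : ℕ) (s p : ℝ) (Ω : Set (Euc N)) (ar : Euc N) : ℝ :=
  sInf {c | ∃ u : Euc N → ℝ, memX0 N s Ω u ∧ (∫ x in Ω, |u x| ^ p) = 1 ∧
    betaMap N u = ar ∧ c = hsNormSq N s u}

/-- The energy functional on `X₀^s(Ω_r)`. -/
def Ifun (N : ℕ) (s p : ℝ) (Ω : Set (Euc N)) (u : Euc N → ℝ) : ℝ :=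
  (1 / 2) * hsNormSq N s u - (1 / p) * ∫ x in Ω, |u x| ^ p

/-- The limit energy functional on `H^s(ℝᴺ)`. -/
def IinfFun (N : ℕ) (s p : ℝ) (u : Euc N → ℝ) : ℝ :=
  (1 / 2) * hsNormSq N s u - (1 / p) * ∫ x, |u x| ^ p

/-- The pairing `⟨I'(u), v⟩`. -/
def Ideriv (N : ℕ) (s p : ℝ) (u v : Euc N → ℝ) : ℝ :=
  fracForm N s u v + (∫ x, u x * v x) - ∫ x, |u x| ^ (p - 2) * u x * v x


/-- Auxiliary: tails of an integrable nonnegative function vanish along an increasing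
exhaustion of the whole space. -/
lemma tail_small_aux {N : ℕ} (g : Euc N → ℝ) (hg : Integrable g)
    (hg0 : ∀ x, 0 ≤ g x) (S : ℕ → Set (Euc N))
    (hm : ∀ n, MeasurableSet (S n)) (hmono : Monotone S)
    (hu : (⋃ n, S n) = Set.univ) (ε : ℝ) (hε : 0 < ε) :
    ∃ n : ℕ, ∫ x in (S n)ᶜ, g x ≤ ε := by
  have hint : IntegrableOn g (⋃ n, S n) := by rw [hu]; simpa using hg
  have ht := MeasureTheory.tendsto_setIntegral_of_monotone hm hmono hint
  rw [hu] at ht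
  simp only [MeasureTheory.Measure.restrict_univ] at ht
  have hev : ∀ᶠ n : ℕ in atTop, (∫ x, g x) - ε < ∫ x in S n, g x :=
    ht.eventually (eventually_gt_nhds (by linarith))
  obtain ⟨n, hn⟩ := hev.exists
  refine ⟨n, ?_⟩
  have hsplit := MeasureTheory.integral_add_compl (hm n) hg
  linarith

/-- `1/2 ≤ ‖f_y‖_{L^p} ≤ 3/2` for large `r` and admissible `y`. -/
theorem cutFun_Lp_norm_bounds (N : ℕ) (s p : ℝ)
    (hs : s ∈ Set.Ioo (0 : ℝ) 1) (hN : 2 * s < N)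
    (hp : p ∈ Set.Ioo (2 : ℝ) (twoStar N s))
    (ρ : ℝ) (hρ : 0 < ρ) (a : Euc N) (ha : lastCoe N a = 0)
    (ξ η : ℝ → ℝ) (hξ : IsXiCutoff ρ ξ) (hη : IsEtaCutoff η)
    (φ : Euc N → ℝ) (hφ : isMinimizer N s p φ) :
    ∃ r₁ > (0 : ℝ), ∀ r ≥ r₁, ∀ y : Euc N,
      r / 2 ≤ ‖y - (a + r • eVecN N)‖ → r / 2 ≤ lastCoe N y →
        1 / 2 ≤ lpNormP N p (cutFun N ξ η (a + r • eVecN N) φ y) ∧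
        lpNormP N p (cutFun N ξ η (a + r • eVecN N) φ y) ≤ 3 / 2 := by
  obtain ⟨hs0, hs1⟩ := hs
  obtain ⟨hp2, hptop⟩ := hp
  have hp0 : (0 : ℝ) < p := by linarith
  have hN0 : 0 < N := by
    have : (0 : ℝ) < (N : ℝ) := by linarith
    exact_mod_cast this
  set i : Fin N := ⟨N - 1, Nat.sub_lt hN0 one_pos⟩ with hi
  have hlast : ∀ x : Euc N, lastCoe N x = x i := fun x => dif_pos hN0
  -- the function g = |φ|^p
  set g : Euc N → ℝ := fun z => |φ z| ^ p with hgdef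
  have hg0 : ∀ z, 0 ≤ g z := fun z => Real.rpow_nonneg (abs_nonneg _) p
  have hgival : (∫ z, g z) = 1 := hφ.2.1
  have hgint : Integrable g := by
    by_contra h
    rw [MeasureTheory.integral_undef h] at hgival
    norm_num at hgival
  have hφm : AEStronglyMeasurable φ (volume : Measure (Euc N)) := hφ.1.1.1
  -- ε₂
  have hhalf : ((1:ℝ)/2) ^ p < 1 := Real.rpow_lt_one (by norm_num) (by norm_num) hp0
  have hhalf0 : (0:ℝ) < ((1:ℝ)/2) ^ p := Real.rpow_pos_of_pos (by norm_num) p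
  set ε2 : ℝ := (1 - ((1:ℝ)/2) ^ p) / 2 with hε2def
  have hε2 : 0 < ε2 := by simp only [hε2def]; linarith
  -- tail 1 : balls
  obtain ⟨R, hR⟩ : ∃ n : ℕ, ∫ z in (Metric.closedBall (0 : Euc N) n)ᶜ, g z ≤ ε2 := by
    refine tail_small_aux g hgint hg0 _ (fun n => measurableSet_closedBall)
      (fun m n h => Metric.closedBall_subset_closedBall (by exact_mod_cast h))
      (iUnion_closedBall_nat _) ε2 hε2
  -- tail 2 : half spaces
  have hproj : Continuous (fun z : Euc N => z i) := (EuclideanSpace.proj i).continuous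
  obtain ⟨T, hT⟩ : ∃ n : ℕ, ∫ z in {z : Euc N | -(n:ℝ) < z i}ᶜ, g z ≤ ε2 := by
    refine tail_small_aux g hgint hg0 _
      (fun n => (isOpen_lt continuous_const hproj).measurableSet)
      (fun m n h z hz => by
        simp only [Set.mem_setOf_eq] at hz ⊢
        have : (m:ℝ) ≤ (n:ℝ) := by exact_mod_cast h
        linarith) ?_ ε2 hε2
    ext z
    simp only [Set.mem_iUnion, Set.mem_setOf_eq, Set.mem_univ, iff_true]
    obtain ⟨n, hn⟩ := exists_nat_gt (-(z i))
    exact ⟨n, by linarith⟩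
  -- r₁
  refine ⟨max (2*(R:ℝ) + 4*ρ + 2) (2*(T:ℝ) + 2), lt_of_lt_of_le (by positivity) (le_max_left _ _), ?_⟩
  intro r hr y hy1 hy2
  set ar : Euc N := a + r • eVecN N with har
  have hrR : 2*(R:ℝ) + 4*ρ + 2 ≤ r := le_trans (le_max_left _ _) hr
  have hrT : 2*(T:ℝ) + 2 ≤ r := le_trans (le_max_right _ _) hr
  rw [hlast] at hy2
  -- the cut function and related quantities
  set c : Euc N → ℝ := cutFun N ξ η ar φ y with hcdef
  set F : Euc N → ℝ := fun x => |c x| ^ p with hFdef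
  set Gd : Euc N → ℝ := fun x => g (x - y) with hGddef
  have hF0 : ∀ x, 0 ≤ F x := fun x => Real.rpow_nonneg (abs_nonneg _) p
  -- the multiplier
  set m : Euc N → ℝ := fun x => ξ ‖x - ar‖ * η (lastCoe N x) with hmdef
  have hm01 : ∀ x, 0 ≤ m x ∧ m x ≤ 1 := by
    intro x
    have h1 := hξ.2.1 ‖x - ar‖
    have h2 := hη.2.1 (lastCoe N x)
    constructor
    · exact mul_nonneg h1.1 h2.1
    · exact mul_le_one₀ h1.2 h2.1 h2.2
  have hceq : ∀ x, c x = m x * φ (x - y) := fun x => rfl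
  have hFeq : ∀ x, F x = |m x| ^ p * g (x - y) := by
    intro x
    simp only [hFdef, hceq x, abs_mul, hgdef]
    exact Real.mul_rpow (abs_nonneg _) (abs_nonneg _)
  have hFle : ∀ x, F x ≤ Gd x := by
    intro x
    rw [hFeq x]
    have h1 : |m x| ^ p ≤ 1 :=
      Real.rpow_le_one (abs_nonneg _) (abs_le.2 ⟨by linarith [(hm01 x).1], (hm01 x).2⟩) hp0.le
    calc |m x| ^ p * g (x - y) ≤ 1 * g (x - y) :=
          mul_le_mul_of_nonneg_right h1 (hg0 _)
      _ = Gd x := by rw [one_mul]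
  -- translation machinery
  have mp : MeasurePreserving (fun x : Euc N => x - y) volume volume :=
    measurePreserving_sub_right volume y
  have emb : MeasurableEmbedding (fun x : Euc N => x - y) :=
    (MeasurableEquiv.subRight y).measurableEmbedding
  have hGdint : Integrable Gd := hgint.comp_sub_right y
  have hGdival : (∫ x, Gd x) = 1 := by
    rw [hGddef]
    rw [MeasureTheory.integral_sub_right_eq_self g y]
    exact hgival
  -- measurability and integrability of F
  have hmc : Continuous m := by
    have h1 : Continuous fun x : Euc N => ξ ‖x - ar‖ :=
      hξ.1.continuous.comp ((continuous_id.sub continuous_const).norm)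
    have h2 : Continuous fun x : Euc N => η (lastCoe N x) := by
      have : (fun x : Euc N => η (lastCoe N x)) = fun x : Euc N => η (x i) := by
        funext x; rw [hlast]
      rw [this]
      exact hη.1.continuous.comp hproj
    exact h1.mul h2
  have hcm : AEStronglyMeasurable c (volume : Measure (Euc N)) := by
    have hφc : AEStronglyMeasurable (φ ∘ fun x : Euc N => x - y) volume :=
      hφm.comp_quasiMeasurePreserving mp.quasiMeasurePreserving
    exact hmc.aestronglyMeasurable.mul hφc
  have hFm : AEStronglyMeasurable F (volume : Measure (Euc N)) := by
    have h1 : AEStronglyMeasurable (fun x => |c x|) volume := by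
      simpa [Real.norm_eq_abs] using hcm.norm
    exact (h1.aemeasurable.pow_const p).aestronglyMeasurable
  have hFint : Integrable F := by
    refine hGdint.mono' hFm (Filter.Eventually.of_forall fun x => ?_)
    rw [Real.norm_eq_abs, abs_of_nonneg (hF0 x)]
    exact hFle x
  have hFup : (∫ x, F x) ≤ 1 := by
    calc (∫ x, F x) ≤ ∫ x, Gd x :=
          MeasureTheory.integral_mono hFint hGdint hFle
      _ = 1 := hGdival
  -- good/bad sets
  set A : Set (Euc N) := Metric.ball ar (2*ρ) with hAdef
  set B : Set (Euc N) := {x : Euc N | x i < 1} with hBdef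
  have hmeasA : MeasurableSet A := measurableSet_ball
  have hmeasB : MeasurableSet B := (isOpen_lt hproj continuous_const).measurableSet
  have hmeasAB : MeasurableSet (A ∪ B) := hmeasA.union hmeasB
  -- F equals Gd outside A ∪ B
  have hFeqGd : ∀ x ∈ (A ∪ B)ᶜ, F x = Gd x := by
    intro x hx
    simp only [Set.mem_compl_iff, Set.mem_union, not_or, hAdef, hBdef,
      Metric.mem_ball, Set.mem_setOf_eq, not_lt] at hx
    have hx1 : 2*ρ ≤ ‖x - ar‖ := by
      rw [dist_eq_norm] at hx; exact hx.1
    have hξ1 : ξ ‖x - ar‖ = 1 := hξ.2.2.2 _ hx1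
    have hη1 : η (lastCoe N x) = 1 := by
      rw [hlast]; exact hη.2.2.2 _ hx.2
    rw [hFeq x, hmdef]
    simp only [hξ1, hη1, mul_one, abs_one, Real.one_rpow, one_mul, hGddef]
  -- translate the bad-set integrals
  have hAint : (∫ x in A, Gd x) ≤ ε2 := by
    have hpre : A = (fun x : Euc N => x - y) ⁻¹' Metric.ball (ar - y) (2*ρ) := by
      ext x
      simp only [hAdef, Set.mem_preimage, Metric.mem_ball, dist_eq_norm,
        sub_sub_sub_cancel_right]
    have htr := mp.setIntegral_preimage_emb emb g (Metric.ball (ar - y) (2*ρ))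
    rw [hpre, htr]
    have hsub2 : Metric.ball (ar - y) (2*ρ) ⊆ (Metric.closedBall (0:Euc N) R)ᶜ := by
      intro z hz
      simp only [Metric.mem_ball, dist_eq_norm] at hz
      simp only [Set.mem_compl_iff, Metric.mem_closedBall, dist_zero_right, not_le]
      have h1 : ‖ar - y‖ - ‖z‖ ≤ ‖(ar - y) - z‖ := norm_sub_norm_le _ _
      have h2 : ‖(ar - y) - z‖ = ‖z - (ar - y)‖ := norm_sub_rev _ _
      have h3 : ‖ar - y‖ = ‖y - ar‖ := norm_sub_rev _ _
      linarith
    exact le_trans (MeasureTheory.setIntegral_mono_set hgint.integrableOn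
      (Filter.Eventually.of_forall fun z => hg0 z) hsub2.eventuallyLE) hR
  have hBint : (∫ x in B, Gd x) ≤ ε2 := by
    have hpre : B = (fun x : Euc N => x - y) ⁻¹' {z : Euc N | z i < 1 - y i} := by
      ext x
      simp only [hBdef, Set.mem_preimage, Set.mem_setOf_eq]
      have hsub : (x - y) i = x i - y i := by simp
      rw [hsub]
      constructor
      · intro h; linarith
      · intro h; linarith
    have htr := mp.setIntegral_preimage_emb emb g {z : Euc N | z i < 1 - y i}
    rw [hpre, htr]
    have hsub2 : {z : Euc N | z i < 1 - y i} ⊆ {z : Euc N | -(T:ℝ) < z i}ᶜ := by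
      intro z hz
      simp only [Set.mem_setOf_eq] at hz
      simp only [Set.mem_compl_iff, Set.mem_setOf_eq, not_lt]
      linarith
    exact le_trans (MeasureTheory.setIntegral_mono_set hgint.integrableOn
      (Filter.Eventually.of_forall fun z => hg0 z) hsub2.eventuallyLE) hT
  -- the bad set integral
  have hbad : (∫ x in A ∪ B, Gd x) ≤ ε2 + ε2 := by
    have hsplit : (∫ x in A ∪ B, Gd x) = (∫ x in A, Gd x) + ∫ x in B \ A, Gd x := by
      rw [← Set.union_diff_self]
      exact MeasureTheory.setIntegral_union disjoint_sdiff_self_right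
        (hmeasB.diff hmeasA) hGdint.integrableOn hGdint.integrableOn
    have hBA : (∫ x in B \ A, Gd x) ≤ ∫ x in B, Gd x :=
      MeasureTheory.setIntegral_mono_set hGdint.integrableOn
        (Filter.Eventually.of_forall fun z => hg0 _) (Set.diff_subset).eventuallyLE
    linarith
  -- lower bound for ∫ F
  have hFlow : ((1:ℝ)/2) ^ p ≤ ∫ x, F x := by
    have hind : (∫ x, ((A ∪ B)ᶜ).indicator Gd x) ≤ ∫ x, F x := by
      refine MeasureTheory.integral_mono_of_nonneg
        (Filter.Eventually.of_forall fun x => Set.indicator_nonneg (fun z _ => hg0 _) x)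
        hFint (Filter.Eventually.of_forall fun x => ?_)
      by_cases hx : x ∈ (A ∪ B)ᶜ
      · rw [Set.indicator_of_mem hx, ← hFeqGd x hx]
      · rw [Set.indicator_of_notMem hx]; exact hF0 x
    rw [MeasureTheory.integral_indicator hmeasAB.compl] at hind
    have hcompl := MeasureTheory.integral_add_compl hmeasAB hGdint
    rw [hGdival] at hcompl
    have : (1:ℝ) - (ε2 + ε2) ≤ ∫ x in (A ∪ B)ᶜ, Gd x := by linarith
    have hfin : ((1:ℝ)/2) ^ p ≤ ∫ x in (A ∪ B)ᶜ, Gd x := by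
      simp only [hε2def] at this
      linarith
    linarith
  -- conclude
  have hgoal : lpNormP N p c = (∫ x, F x) ^ (1/p) := rfl
  have hFnn : 0 ≤ ∫ x, F x := MeasureTheory.integral_nonneg hF0
  constructor
  · rw [hgoal]
    have he : p * (1/p) = 1 := by field_simp
    have : (((1:ℝ)/2) ^ p) ^ (1/p) = ((1:ℝ)/2) := by
      rw [← Real.rpow_mul (by norm_num : (0:ℝ) ≤ 1/2), he, Real.rpow_one]
    rw [← this]
    exact Real.rpow_le_rpow hhalf0.le hFlow (by positivity)
  · rw [hgoal]
    calc (∫ x, F x) ^ (1/p) ≤ (1:ℝ) ^ (1/p) :=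
          Real.rpow_le_rpow hFnn hFup (by positivity)
      _ = 1 := Real.one_rpow _
      _ ≤ 3/2 := by norm_num

end
end

section
/- There exists r₃ > 0 such that for every r ≥ r₃ and every y ∈ ℝᴺ with |y − a_r| = r/2, one has ⟨β(Ψ_y), y⟩ > 0, where Ψ_y = f_y/‖f_y‖_{L^p(ℝᴺ)}. -/
open MeasureTheory Filter Metric

noncomputable section

lemma chiFun_eq_inv_max (t : ℝ) : chiFun t = (max t 1)⁻¹ := by
  unfold chiFun
  rcases le_or_gt t 1 with h | h
  · simp [h, max_eq_right h]
  · simp [not_le.2 h, max_eq_left h.le, one_div]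

lemma max_one_pos (t : ℝ) : 0 < max t 1 := lt_of_lt_of_le one_pos (le_max_right _ _)

lemma chiFun_nonneg (t : ℝ) : 0 ≤ chiFun t := by
  rw [chiFun_eq_inv_max]; exact (inv_pos.2 (max_one_pos t)).le

lemma continuous_chiFun : Continuous chiFun := by
  have h : chiFun = fun t => (max t 1)⁻¹ := funext chiFun_eq_inv_max
  rw [h]
  exact (continuous_id.max continuous_const).inv₀ fun t => (max_one_pos t).ne'

lemma chiFun_mul_self_le (t : ℝ) : chiFun t * t ≤ 1 := by
  rw [chiFun_eq_inv_max]
  calc (max t 1)⁻¹ * t ≤ (max t 1)⁻¹ * max t 1 := by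
        exact mul_le_mul_of_nonneg_left (le_max_left _ _) (inv_pos.2 (max_one_pos t)).le
    _ = 1 := inv_mul_cancel₀ (max_one_pos t).ne'

lemma chiFun_ge (t c : ℝ) (hc : 1 ≤ c) (h : t ≤ c) : c⁻¹ ≤ chiFun t := by
  rw [chiFun_eq_inv_max]
  exact inv_anti₀ (max_one_pos t) (max_le h hc)

lemma abs_apply_le_norm {n : ℕ} (x : Euc n) (i : Fin n) : |x i| ≤ ‖x‖ := by
  rw [EuclideanSpace.norm_eq, show |x i| = Real.sqrt ((x i) ^ 2) by
    rw [Real.sqrt_sq_eq_abs]]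
  apply Real.sqrt_le_sqrt
  have : (x i) ^ 2 = ‖x i‖ ^ 2 := by rw [Real.norm_eq_abs, sq_abs]
  rw [this]
  exact Finset.single_le_sum (f := fun j => ‖x j‖ ^ 2) (fun j _ => by positivity)
    (Finset.mem_univ i)


set_option maxHeartbeats 1000000 in
open scoped RealInnerProductSpace in
/-- `⟨β(Ψ_y), y⟩ > 0` for large `r` and `|y - a_r| = r/2`. -/
theorem beta_psi_inner_pos (N : ℕ) (s p : ℝ)
    (hs : s ∈ Set.Ioo (0 : ℝ) 1) (hN : 2 * s < N)
    (hp : p ∈ Set.Ioo (2 : ℝ) (twoStar N s))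
    (ρ : ℝ) (hρ : 0 < ρ) (a : Euc N) (ha : lastCoe N a = 0)
    (ξ η : ℝ → ℝ) (hξ : IsXiCutoff ρ ξ) (hη : IsEtaCutoff η)
    (φ : Euc N → ℝ) (hφ : isMinimizer N s p φ)
    (hpos : ∀ x, 0 < φ x) (hcont : Continuous φ)
    (U : ℝ → ℝ) (hrad : ∀ x, φ x = U ‖x‖)
    (hmono : ∀ t₁ t₂ : ℝ, 0 ≤ t₁ → t₁ ≤ t₂ → U t₂ ≤ U t₁) :
    ∃ r₃ > (0 : ℝ), ∀ r ≥ r₃, ∀ y : Euc N, ‖y - (a + r • eVecN N)‖ = r / 2 →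
      0 < ⟪betaMap N (psiFun N p ξ η (a + r • eVecN N) φ y), y⟫ := by
  obtain ⟨hφH, hφp, -⟩ := hφ
  have hp0 : (0:ℝ) < p := lt_trans two_pos hp.1
  have hN0 : 0 < N := by
    rcases Nat.eq_zero_or_pos N with h | h
    · exfalso; rw [h] at hN; push_cast at hN; nlinarith [hs.1]
    · exact h
  set i : Fin N := ⟨N - 1, Nat.sub_lt hN0 one_pos⟩ with hi
  have hlast : ∀ x : Euc N, lastCoe N x = x i := fun x => dif_pos hN0
  set e : Euc N := eVecN N with he
  have he_def : e = EuclideanSpace.single i (1 : ℝ) := dif_pos hN0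
  have he_norm : ‖e‖ = 1 := by rw [he_def, EuclideanSpace.norm_single]; norm_num
  have he_i : e i = 1 := by rw [he_def]; simp [EuclideanSpace.single_apply]
  have hφ_nonneg : ∀ x, 0 ≤ φ x := fun x => (hpos x).le
  have hU1 : 0 < U 1 := by
    have : U 1 = φ e := by rw [hrad e, he_norm]
    rw [this]; exact hpos e
  -- continuity of lastCoe
  have hlast_cont : Continuous (lastCoe N) := by
    have : (lastCoe N) = fun x : Euc N => x i := funext hlast
    rw [this]
    exact (EuclideanSpace.proj i).continuous
  -- φ squared is integrable
  have hΦ : Integrable (fun x : Euc N => φ x ^ 2) := hφH.1.integrable_sq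
  have hΦy : ∀ y : Euc N, Integrable (fun x : Euc N => φ (x - y) ^ 2) :=
    fun y => hΦ.comp_sub_right y
  have hφp_int : Integrable (fun x : Euc N => |φ x| ^ p) := by
    by_contra h
    rw [integral_undef h] at hφp
    norm_num at hφp
  -- tail
  set Tail : ℕ → ℝ := fun n => ∫ x in (ball (0 : Euc N) n)ᶜ, φ x ^ 2 with hTail
  have hTail_to : Tendsto Tail atTop (nhds 0) := by
    have hmonoS : Monotone (fun n : ℕ => ball (0 : Euc N) n) := fun m n hmn =>
      ball_subset_ball (by exact_mod_cast hmn)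
    have hU : (⋃ n : ℕ, ball (0 : Euc N) n) = Set.univ := iUnion_ball_nat 0
    have h1 : Tendsto (fun n : ℕ => ∫ x in ball (0 : Euc N) n, φ x ^ 2) atTop
        (nhds (∫ x, φ x ^ 2)) := by
      have := tendsto_setIntegral_of_monotone (fun n : ℕ => measurableSet_ball)
        hmonoS (by rw [hU]; exact hΦ.integrableOn)
      rwa [hU, setIntegral_univ] at this
    have h2 : ∀ n : ℕ, Tail n = (∫ x, φ x ^ 2) - ∫ x in ball (0 : Euc N) n, φ x ^ 2 := by
      intro n
      have := integral_add_compl (measurableSet_ball (x := (0 : Euc N)) (ε := (n : ℝ))) hΦ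
      simp only [hTail]; linarith
    have h3 : Tendsto (fun n : ℕ => (∫ x, φ x ^ 2) - ∫ x in ball (0 : Euc N) n, φ x ^ 2)
        atTop (nhds ((∫ x, φ x ^ 2) - ∫ x, φ x ^ 2)) := tendsto_const_nhds.sub h1
    rw [show (0:ℝ) = (∫ x, φ x ^ 2) - ∫ x, φ x ^ 2 by ring]
    exact h3.congr (fun n => (h2 n).symm)
  set m : ℝ := (U 1) ^ 2 * (volume (ball (0 : Euc N) 1)).toReal with hm_def
  have hm : 0 < m := by
    apply mul_pos (by positivity)
    exact ENNReal.toReal_pos (measure_ball_pos volume 0 one_pos).ne' measure_ball_lt_top.ne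
  obtain ⟨n₀, hn₀⟩ := (hTail_to.eventually_lt_const (show 0 < m / 3 by positivity)).exists
  refine ⟨max (max (4*ρ+4) 6) (2*(n₀:ℝ)+2),
    lt_of_lt_of_le (by norm_num : (0:ℝ) < 6)
      (le_trans (le_max_right (4*ρ+4) 6) (le_max_left _ _)), ?_⟩
  intro r hr y hy
  have hr6 : (6:ℝ) ≤ r := le_trans (le_trans (le_max_right _ _) (le_max_left _ _)) hr
  have hrρ : 4*ρ+4 ≤ r := le_trans (le_trans (le_max_left _ _) (le_max_left _ _)) hr
  have hrn : 2*(n₀:ℝ)+2 ≤ r := le_trans (le_max_right _ _) hr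
  set ar : Euc N := a + r • e with har
  have har_i : ar i = r := by
    have ha_i : a i = 0 := by rw [← hlast a]; exact ha
    simp [har, PiLp.add_apply, PiLp.smul_apply, ha_i, he_i, smul_eq_mul]
  have hyar : ‖y - ar‖ = r / 2 := hy
  have hy_i : r/2 ≤ y i := by
    have h1 : |(y - ar) i| ≤ r/2 := by rw [← hyar]; exact abs_apply_le_norm _ i
    have h2 : (y - ar) i = y i - r := by simp [PiLp.sub_apply, har_i]
    rw [h2] at h1
    have := abs_le.1 h1
    linarith [this.1]
  have hynorm : r/2 ≤ ‖y‖ :=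
    le_trans hy_i (le_trans (le_abs_self _) (abs_apply_le_norm y i))
  have hy2 : (2:ℝ) ≤ ‖y‖ := by linarith
  have hy0 : (0:ℝ) < ‖y‖ := by linarith
  -- the function f
  set f : Euc N → ℝ := cutFun N ξ η ar φ y with hf_def
  have hf_apply : ∀ x, f x = ξ ‖x - ar‖ * η (lastCoe N x) * φ (x - y) := fun x => rfl
  have hf_nonneg : ∀ x, 0 ≤ f x := fun x =>
    mul_nonneg (mul_nonneg (hξ.2.1 _).1 (hη.2.1 _).1) (hφ_nonneg _)
  have hf_le : ∀ x, f x ≤ φ (x - y) := by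
    intro x
    rw [hf_apply]
    have h1 : ξ ‖x - ar‖ * η (lastCoe N x) ≤ 1 :=
      mul_le_one₀ (hξ.2.1 _).2 (hη.2.1 _).1 (hη.2.1 _).2
    calc ξ ‖x - ar‖ * η (lastCoe N x) * φ (x - y) ≤ 1 * φ (x - y) :=
          mul_le_mul_of_nonneg_right h1 (hφ_nonneg _)
      _ = φ (x - y) := one_mul _
  have hdist : ∀ x ∈ ball y 1, ‖x - y‖ < 1 := fun x hx => by
    rw [← dist_eq_norm]; exact mem_ball.1 hx
  have hf_ball : ∀ x ∈ ball y 1, f x = φ (x - y) := by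
    intro x hx
    have hxy := hdist x hx
    have hξ1 : ξ ‖x - ar‖ = 1 := by
      apply hξ.2.2.2
      have h1 : dist y ar ≤ dist y x + dist x ar := dist_triangle _ _ _
      rw [dist_eq_norm, dist_eq_norm, dist_eq_norm, hyar, norm_sub_rev y x] at h1
      linarith
    have hη1 : η (lastCoe N x) = 1 := by
      apply hη.2.2.2
      have h2 : lastCoe N x = y i + (x - y) i := by
        rw [hlast]; simp [PiLp.sub_apply]
      have h3 := (abs_le.1 (abs_apply_le_norm (x - y) i)).1
      rw [h2]; linarith
    rw [hf_apply, hξ1, hη1, one_mul, one_mul]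
  have hinner : ∀ x ∈ ball y 1, ‖y‖^2 - ‖y‖ ≤ ⟪x, y⟫ := by
    intro x hx
    have h1 : ⟪x, y⟫ = ⟪x - y, y⟫ + ⟪y, y⟫ := by rw [inner_sub_left]; ring
    have h2 := (abs_le.1 (abs_real_inner_le_norm (x - y) y)).1
    have h3 : ‖x - y‖ * ‖y‖ ≤ 1 * ‖y‖ :=
      mul_le_mul_of_nonneg_right (hdist x hx).le (norm_nonneg y)
    have h5 : ⟪y, y⟫ = ‖y‖^2 := real_inner_self_eq_norm_sq y
    rw [h1, h5]; linarith
  have hf_cont : Continuous f := by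
    apply Continuous.mul
    · exact (hξ.1.continuous.comp ((continuous_id.sub continuous_const).norm)).mul
        (hη.1.continuous.comp hlast_cont)
    · exact hcont.comp (continuous_id.sub continuous_const)
  -- K = lpNormP of f, positivity
  set K : ℝ := lpNormP N p f with hK_def
  have hfp_int : Integrable (fun x => |f x| ^ p) := by
    apply Integrable.mono (hφp_int.comp_sub_right y)
      ((hf_cont.abs.rpow_const (fun x => Or.inr hp0.le)).aestronglyMeasurable)
    refine ae_of_all _ fun x => ?_
    rw [Real.norm_eq_abs, Real.norm_eq_abs,
      abs_of_nonneg (Real.rpow_nonneg (abs_nonneg _) _),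
      abs_of_nonneg (Real.rpow_nonneg (abs_nonneg _) _)]
    apply Real.rpow_le_rpow (abs_nonneg _) _ hp0.le
    rw [abs_of_nonneg (hf_nonneg x), abs_of_nonneg (hφ_nonneg _)]
    exact hf_le x
  have hint_pos : 0 < ∫ x, |f x| ^ p := by
    have hc : ∀ x ∈ ball y 1, (U 1) ^ p ≤ |f x| ^ p := by
      intro x hx
      apply Real.rpow_le_rpow hU1.le _ hp0.le
      rw [abs_of_nonneg (hf_nonneg x), hf_ball x hx, hrad (x - y)]
      exact hmono ‖x - y‖ 1 (norm_nonneg _) (hdist x hx).le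
    have h1 : (U 1)^p * (volume (ball y 1)).toReal ≤ ∫ x in ball y 1, |f x| ^ p :=
      setIntegral_ge_of_const_le_real measurableSet_ball measure_ball_lt_top.ne hc
        hfp_int.integrableOn
    have h2 : ∫ x in ball y 1, |f x| ^ p ≤ ∫ x, |f x| ^ p :=
      setIntegral_le_integral hfp_int (ae_of_all _ fun x => Real.rpow_nonneg (abs_nonneg _) _)
    have h3 : 0 < (U 1)^p * (volume (ball y 1)).toReal :=
      mul_pos (Real.rpow_pos_of_pos hU1 _)
        (ENNReal.toReal_pos (measure_ball_pos _ _ one_pos).ne' measure_ball_lt_top.ne)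
    linarith
  have hK : 0 < K := by
    rw [hK_def]
    show (0:ℝ) < (∫ x, |f x| ^ p) ^ (1/p)
    exact Real.rpow_pos_of_pos hint_pos _
  -- the scalar integrand g
  set g : Euc N → ℝ := fun x => f x ^ 2 * chiFun ‖x‖ * ⟪x, y⟫ with hg_def
  have hg_cont : Continuous g :=
    ((hf_cont.pow 2).mul (continuous_chiFun.comp continuous_norm)).mul
      (continuous_id.inner continuous_const)
  have hg_bound : ∀ x, |g x| ≤ ‖y‖ * φ (x - y) ^ 2 := by
    intro x
    calc |g x| = (f x ^ 2 * chiFun ‖x‖) * |⟪x, y⟫| := by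
          rw [show g x = (f x ^ 2 * chiFun ‖x‖) * ⟪x, y⟫ from rfl, abs_mul,
            abs_of_nonneg (mul_nonneg (sq_nonneg _) (chiFun_nonneg _))]
      _ ≤ (f x ^ 2 * chiFun ‖x‖) * (‖x‖ * ‖y‖) :=
          mul_le_mul_of_nonneg_left (abs_real_inner_le_norm x y)
            (mul_nonneg (sq_nonneg _) (chiFun_nonneg _))
      _ = (f x ^ 2) * ((chiFun ‖x‖ * ‖x‖) * ‖y‖) := by ring
      _ ≤ (f x ^ 2) * (1 * ‖y‖) := by
          apply mul_le_mul_of_nonneg_left _ (sq_nonneg _)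
          exact mul_le_mul_of_nonneg_right (chiFun_mul_self_le _) (norm_nonneg _)
      _ = f x ^ 2 * ‖y‖ := by ring
      _ ≤ φ (x - y) ^ 2 * ‖y‖ :=
          mul_le_mul_of_nonneg_right (pow_le_pow_left₀ (hf_nonneg x) (hf_le x) 2)
            (norm_nonneg _)
      _ = ‖y‖ * φ (x - y) ^ 2 := by ring
  have hg_int : Integrable g :=
    Integrable.mono' ((hΦy y).const_mul ‖y‖) hg_cont.aestronglyMeasurable
      (ae_of_all _ fun x => by rw [Real.norm_eq_abs]; exact hg_bound x)
  -- the half space A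
  set A : Set (Euc N) := {x : Euc N | 0 ≤ ⟪x, y⟫} with hA_def
  have hA : MeasurableSet A :=
    measurableSet_le measurable_const
      ((continuous_id.inner continuous_const).measurable)
  have hBA : ball y 1 ⊆ A := by
    intro x hx
    have := hinner x hx
    show (0:ℝ) ≤ ⟪x, y⟫
    linarith [sq_nonneg (‖y‖ - 2)]
  have hP1 : ∫ x in ball y 1, g x ≤ ∫ x in A, g x := by
    apply setIntegral_mono_set hg_int.integrableOn
    · refine (ae_restrict_iff' hA).2 (ae_of_all _ fun x hx => ?_)
      exact mul_nonneg (mul_nonneg (sq_nonneg _) (chiFun_nonneg _)) hx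
    · exact HasSubset.Subset.eventuallyLE hBA
  set clow : ℝ := (U 1)^2 * ((‖y‖ + 1)⁻¹ * (‖y‖^2 / 2)) with hclow
  have hP2 : clow * (volume (ball y 1)).toReal ≤ ∫ x in ball y 1, g x := by
    apply setIntegral_ge_of_const_le_real measurableSet_ball measure_ball_lt_top.ne _
      hg_int.integrableOn
    intro x hx
    have h1 : (U 1)^2 ≤ f x ^ 2 := by
      apply pow_le_pow_left₀ hU1.le
      rw [hf_ball x hx, hrad (x - y)]
      exact hmono ‖x - y‖ 1 (norm_nonneg _) (hdist x hx).le
    have h2 : (‖y‖ + 1)⁻¹ ≤ chiFun ‖x‖ := by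
      apply chiFun_ge _ _ (by linarith [norm_nonneg y])
      have hxe : y + (x - y) = x := by abel
      calc ‖x‖ = ‖y + (x - y)‖ := by rw [hxe]
        _ ≤ ‖y‖ + ‖x - y‖ := norm_add_le _ _
        _ ≤ ‖y‖ + 1 := by linarith [hdist x hx]
    have h3 : ‖y‖^2/2 ≤ ⟪x, y⟫ := by
      have := hinner x hx; linarith [sq_nonneg (‖y‖ - 2)]
    calc clow = ((U 1)^2 * (‖y‖+1)⁻¹) * (‖y‖^2/2) := by rw [hclow]; ring
      _ ≤ (f x ^2 * chiFun ‖x‖) * ⟪x, y⟫ := by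
          apply mul_le_mul (mul_le_mul h1 h2 (by positivity) (sq_nonneg _)) h3
            (by positivity) (mul_nonneg (sq_nonneg _) (chiFun_nonneg _))
      _ = g x := rfl
  have hvol : (volume (ball y 1)).toReal = (volume (ball (0:Euc N) 1)).toReal := by
    rw [Measure.addHaar_ball_center]
  have hkey : ‖y‖ / 3 ≤ (‖y‖+1)⁻¹ * (‖y‖^2/2) := by
    rw [inv_mul_eq_div, div_le_div_iff₀ (by norm_num) (by linarith : (0:ℝ) < ‖y‖ + 1)]
    linarith [sq_nonneg (‖y‖ - 2)]
  have hP3 : ‖y‖ * (m / 3) ≤ clow * (volume (ball y 1)).toReal := by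
    rw [hvol, hclow, hm_def]
    calc ‖y‖ * ((U 1)^2 * (volume (ball (0:Euc N) 1)).toReal / 3)
        = ((U 1)^2 * (volume (ball (0:Euc N) 1)).toReal) * (‖y‖ / 3) := by ring
      _ ≤ ((U 1)^2 * (volume (ball (0:Euc N) 1)).toReal) * ((‖y‖+1)⁻¹ * (‖y‖^2/2)) :=
          mul_le_mul_of_nonneg_left hkey (by positivity)
      _ = (U 1)^2 * ((‖y‖+1)⁻¹ * (‖y‖^2/2)) * (volume (ball (0:Euc N) 1)).toReal := by ring
  -- negative part
  have hAc : Aᶜ ⊆ (ball y (r/2))ᶜ := by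
    intro x hx
    simp only [Set.mem_compl_iff, hA_def, Set.mem_setOf_eq, not_le] at hx
    simp only [Set.mem_compl_iff, mem_ball, not_lt, dist_eq_norm]
    have h1 : ‖x - y‖^2 = ‖x‖^2 - 2*⟪x,y⟫ + ‖y‖^2 := norm_sub_sq_real x y
    have h2 : ‖y‖^2 ≤ ‖x - y‖^2 := by linarith [sq_nonneg ‖x‖]
    have h3 : ‖y‖ ≤ ‖x - y‖ := by
      have h4 := Real.sqrt_le_sqrt h2
      rwa [Real.sqrt_sq (norm_nonneg _), Real.sqrt_sq (norm_nonneg _)] at h4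
    linarith
  have hN1 : -(‖y‖ * Tail n₀) ≤ ∫ x in Aᶜ, g x := by
    have hb1 : ∫ x in Aᶜ, (-(‖y‖ * φ (x - y)^2)) ≤ ∫ x in Aᶜ, g x := by
      apply setIntegral_mono_on (((hΦy y).const_mul ‖y‖).neg.integrableOn)
        hg_int.integrableOn hA.compl
      intro x _
      show -(‖y‖ * φ (x - y)^2) ≤ g x
      have h1 := hg_bound x
      have h2 := neg_abs_le (g x)
      linarith
    rw [integral_neg] at hb1
    have hb2 : ∫ x in Aᶜ, ‖y‖ * φ (x - y)^2 ≤ ∫ x in (ball y (r/2))ᶜ, ‖y‖ * φ (x - y)^2 := by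
      apply setIntegral_mono_set (((hΦy y).const_mul ‖y‖).integrableOn)
        (ae_of_all _ fun x => by positivity)
      exact HasSubset.Subset.eventuallyLE hAc
    have hb3 : ∫ x in (ball y (r/2))ᶜ, ‖y‖ * φ (x - y)^2
        = ‖y‖ * ∫ x in (ball y (r/2))ᶜ, φ (x - y)^2 := integral_const_mul _ _
    have hb4 : ∫ x in (ball y (r/2))ᶜ, φ (x - y)^2
        = ∫ x in (ball (0:Euc N) (r/2))ᶜ, φ x ^ 2 := by
      rw [← integral_indicator measurableSet_ball.compl,
        ← integral_indicator measurableSet_ball.compl]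
      have hind : ∀ x : Euc N, ((ball y (r/2))ᶜ).indicator (fun x => φ (x - y)^2) x
          = ((ball (0:Euc N) (r/2))ᶜ).indicator (fun z => φ z ^ 2) (x - y) := by
        intro x
        have hmem : x ∈ (ball y (r/2))ᶜ ↔ (x - y) ∈ (ball (0:Euc N) (r/2))ᶜ := by
          simp [mem_ball, dist_eq_norm]
        by_cases hx : x ∈ (ball y (r/2))ᶜ
        · rw [Set.indicator_of_mem hx, Set.indicator_of_mem (hmem.1 hx)]
        · rw [Set.indicator_of_notMem hx,
            Set.indicator_of_notMem (fun h => hx (hmem.2 h))]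
      simp only [hind]
      exact integral_sub_right_eq_self
        (((ball (0:Euc N) (r/2))ᶜ).indicator (fun z => φ z ^ 2)) y
    have hb5 : ∫ x in (ball (0:Euc N) (r/2))ᶜ, φ x ^ 2 ≤ Tail n₀ := by
      apply setIntegral_mono_set hΦ.integrableOn (ae_of_all _ fun x => sq_nonneg _)
      apply HasSubset.Subset.eventuallyLE
      apply Set.compl_subset_compl.2
      apply ball_subset_ball
      linarith
    calc -(‖y‖ * Tail n₀) ≤ -(∫ x in Aᶜ, ‖y‖ * φ (x - y)^2) := by
          apply neg_le_neg
          calc ∫ x in Aᶜ, ‖y‖ * φ (x - y)^2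
              ≤ ∫ x in (ball y (r/2))ᶜ, ‖y‖ * φ (x - y)^2 := hb2
            _ = ‖y‖ * ∫ x in (ball y (r/2))ᶜ, φ (x - y)^2 := hb3
            _ = ‖y‖ * ∫ x in (ball (0:Euc N) (r/2))ᶜ, φ x ^ 2 := by rw [hb4]
            _ ≤ ‖y‖ * Tail n₀ := mul_le_mul_of_nonneg_left hb5 (norm_nonneg y)
      _ ≤ ∫ x in Aᶜ, g x := hb1
  -- conclusion on the scalar integral
  have hI : 0 < ∫ x, g x := by
    have hsplit := integral_add_compl hA hg_int
    have hposA : ‖y‖ * (m/3) ≤ ∫ x in A, g x := le_trans hP3 (le_trans hP2 hP1)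
    have hmul : 0 < ‖y‖ * (m/3 - Tail n₀) := mul_pos hy0 (by linarith)
    have hms := mul_sub ‖y‖ (m/3) (Tail n₀)
    linarith
  -- assemble
  set Ψ : Euc N → ℝ := psiFun N p ξ η ar φ y with hΨ_def
  have hΨ_apply : ∀ x, Ψ x = f x / K := fun x => rfl
  have hΨ_cont : Continuous Ψ := hf_cont.div_const K
  set F : Euc N → Euc N := fun x => ((Ψ x)^2 * chiFun ‖x‖) • x with hF_def
  have hF_int : Integrable F := by
    apply Integrable.mono' ((hΦy y).const_mul ((K^2)⁻¹))
      (Continuous.aestronglyMeasurable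
        (((hΨ_cont.pow 2).mul (continuous_chiFun.comp continuous_norm)).smul continuous_id))
    refine ae_of_all _ fun x => ?_
    show ‖F x‖ ≤ (K^2)⁻¹ * φ (x - y)^2
    rw [show F x = ((Ψ x)^2 * chiFun ‖x‖) • x from rfl, norm_smul, Real.norm_eq_abs,
      abs_of_nonneg (mul_nonneg (sq_nonneg _) (chiFun_nonneg _))]
    calc (Ψ x)^2 * chiFun ‖x‖ * ‖x‖ ≤ (Ψ x)^2 * 1 := by
          rw [mul_assoc]
          exact mul_le_mul_of_nonneg_left (chiFun_mul_self_le _) (sq_nonneg _)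
      _ = (f x / K)^2 := by rw [hΨ_apply]; ring
      _ = (K^2)⁻¹ * (f x)^2 := by rw [div_pow, div_eq_mul_inv, mul_comm]
      _ ≤ (K^2)⁻¹ * φ (x - y)^2 :=
          mul_le_mul_of_nonneg_left (pow_le_pow_left₀ (hf_nonneg x) (hf_le x) 2)
            (by positivity)
  have hbeta : ⟪betaMap N Ψ, y⟫ = ∫ x, (Ψ x ^2 * chiFun ‖x‖) * ⟪x, y⟫ := by
    rw [real_inner_comm]
    rw [show betaMap N Ψ = ∫ x, F x from rfl]
    rw [← integral_inner hF_int y]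
    congr 1
    funext x
    rw [show F x = ((Ψ x)^2 * chiFun ‖x‖) • x from rfl, real_inner_smul_right,
      real_inner_comm]
  have heq : (fun x => (Ψ x ^2 * chiFun ‖x‖) * ⟪x, y⟫) = fun x => (K^2)⁻¹ * g x := by
    funext x
    rw [hΨ_apply, show g x = f x ^ 2 * chiFun ‖x‖ * ⟪x, y⟫ from rfl]
    have hK0 : K ≠ 0 := hK.ne'
    field_simp
  rw [hbeta, heq, integral_const_mul]
  exact mul_pos (inv_pos.2 (pow_pos hK 2)) hI


end
end

section
/- Let u ∈ L²(ℝᴺ) be radially symmetric and radially nonincreasing, i.e. u(x) = U(|x|) with U : [0,∞) → [0,∞) nonincreasing. Then lim_{|y|→∞} ∫_{{x ∈ ℝᴺ : ⟨x, y⟩ < 0}} u(x − y)² χ(|x|) |x| dx = 0, where χ(t) = 1 for 0 ≤ t ≤ 1 and χ(t) = 1/t for t ≥ 1. -/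
open MeasureTheory Filter Metric

noncomputable section

open scoped RealInnerProductSpace in
/-- for a radially symmetric nonincreasing `u ∈ L²(ℝᴺ)`, the weighted mass
of the translate `u(· - y)` on the half space `{⟨x, y⟩ < 0}` vanishes as `|y| → ∞`. -/
theorem radial_translate_halfspace_vanish (N : ℕ) (hN : 1 ≤ N)
    (u : Euc N → ℝ) (U : ℝ → ℝ)
    (hrad : ∀ x, u x = U ‖x‖) (hnn : ∀ t : ℝ, 0 ≤ t → 0 ≤ U t)
    (hmono : ∀ t₁ t₂ : ℝ, 0 ≤ t₁ → t₁ ≤ t₂ → U t₂ ≤ U t₁)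
    (hL2 : MemLp u 2 (volume : Measure (Euc N))) :
    ∀ ε > (0 : ℝ), ∃ R > (0 : ℝ), ∀ y : Euc N, R ≤ ‖y‖ →
      (∫ x in {x : Euc N | ⟪x, y⟫ < 0}, (u (x - y)) ^ 2 * (chiFun ‖x‖ * ‖x‖)) < ε := by
  intro ε hε
  set g : EuclideanSpace ℝ (Fin N) → ℝ := fun z => u z ^ 2 with hg
  have hgint : Integrable g := hL2.integrable_sq
  have hgnn : ∀ z, 0 ≤ g z := fun z => sq_nonneg _
  -- tendsto over balls
  have hball : Tendsto (fun n : ℕ => ∫ z in ball (0 : EuclideanSpace ℝ (Fin N)) n, g z)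
      atTop (nhds (∫ z in ⋃ n : ℕ, ball (0 : EuclideanSpace ℝ (Fin N)) n, g z)) :=
    tendsto_setIntegral_of_monotone (fun n => measurableSet_ball)
      (fun m n hmn => ball_subset_ball (by exact_mod_cast hmn)) (hgint.integrableOn)
  have hunion : (⋃ n : ℕ, ball (0 : EuclideanSpace ℝ (Fin N)) n) = Set.univ := by
    ext z; simp only [Set.mem_iUnion, mem_ball, dist_zero_right, Set.mem_univ, iff_true]
    obtain ⟨n, hn⟩ := exists_nat_gt ‖z‖; exact ⟨n, hn⟩
  rw [hunion] at hball
  simp only [Measure.restrict_univ] at hball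
  have : ∀ᶠ n : ℕ in atTop, (∫ z, g z) - (∫ z in ball (0 : EuclideanSpace ℝ (Fin N)) n, g z) < ε := by
    have := hball.sub_const (∫ z, g z)
    have h2 : Tendsto (fun n : ℕ => (∫ z, g z) - ∫ z in ball (0 : EuclideanSpace ℝ (Fin N)) n, g z) atTop (nhds 0) := by
      have := hball.const_sub (∫ z, g z); simpa using this
    exact (h2.eventually (eventually_lt_nhds hε)).mono (fun n hn => by simpa using hn)
  obtain ⟨n, hn⟩ := this.exists
  refine ⟨max n 1, lt_of_lt_of_le one_pos (le_max_right _ _), ?_⟩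
  intro y hy
  have hyn : (n : ℝ) ≤ ‖y‖ := le_trans (le_max_left _ _) hy
  -- integral of g outside the ball of radius n is < ε
  have hcompl : (∫ z in (ball (0 : EuclideanSpace ℝ (Fin N)) n)ᶜ, g z) < ε := by
    have := integral_add_compl (measurableSet_ball (x := (0 : EuclideanSpace ℝ (Fin N))) (ε := (n : ℝ))) hgint
    linarith
  set S : Set (EuclideanSpace ℝ (Fin N)) := {x | ⟪x, y⟫ < 0} with hS
  have hSmeas : MeasurableSet S := by
    have : Continuous fun x : EuclideanSpace ℝ (Fin N) => ⟪x, y⟫ := continuous_inner.comp (continuous_id.prodMk continuous_const)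
    exact measurableSet_lt this.measurable measurable_const
  set T : Set (EuclideanSpace ℝ (Fin N)) := {z | ‖y‖ ≤ ‖z‖} with hT
  have hTmeas : MeasurableSet T := measurableSet_le measurable_const continuous_norm.measurable
  set F : EuclideanSpace ℝ (Fin N) → ℝ := T.indicator g with hF
  have hFint : Integrable F := hgint.indicator hTmeas
  have hFnn : ∀ z, 0 ≤ F z := fun z => Set.indicator_nonneg (fun z _ => hgnn z) z
  have hFy : Integrable (fun x => F (x - y)) := hFint.comp_sub_right y
  -- key pointwise bound on S
  have hkey : ∀ x ∈ S, u (x - y) ^ 2 * (chiFun ‖x‖ * ‖x‖) ≤ F (x - y) := by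
    intro x hx
    have hxy : ⟪x, y⟫ < 0 := hx
    have hnorm : ‖y‖ ≤ ‖x - y‖ := by
      have h1 : ‖x - y‖ ^ 2 = ‖x‖ ^ 2 - 2 * ⟪x, y⟫ + ‖y‖ ^ 2 := norm_sub_sq_real x y
      nlinarith [norm_nonneg (x - y), norm_nonneg x, norm_nonneg y]
    have hmem : x - y ∈ T := hnorm
    rw [hF, Set.indicator_of_mem hmem]
    have hw : chiFun ‖x‖ * ‖x‖ ≤ 1 := by
      rw [chiFun]
      split_ifs with h
      · simpa using h
      · push_neg at h
        rw [one_div, inv_mul_cancel₀ (ne_of_gt (lt_trans one_pos h))]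
    calc u (x - y) ^ 2 * (chiFun ‖x‖ * ‖x‖) ≤ u (x - y) ^ 2 * 1 :=
          mul_le_mul_of_nonneg_left hw (sq_nonneg _)
      _ = g (x - y) := by rw [mul_one]
  -- integrability of left integrand on S
  have hmw : AEStronglyMeasurable (fun x : EuclideanSpace ℝ (Fin N) => u (x - y) ^ 2 * (chiFun ‖x‖ * ‖x‖)) volume := by
    have hu : AEStronglyMeasurable (fun x : EuclideanSpace ℝ (Fin N) => u (x - y)) volume := by
      exact (hL2.aestronglyMeasurable.comp_quasiMeasurePreserving
        (measurePreserving_sub_right volume y).quasiMeasurePreserving)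
    have hch : Measurable chiFun := by
      apply Measurable.ite (measurableSet_le measurable_id measurable_const) measurable_const
      exact measurable_const.div measurable_id
    exact ((hu.pow 2).mul (((hch.comp continuous_norm.measurable).mul continuous_norm.measurable).aestronglyMeasurable))
  have hLint : IntegrableOn (fun x => u (x - y) ^ 2 * (chiFun ‖x‖ * ‖x‖)) S := by
    refine (hFy.integrableOn).mono' (hmw.restrict) ?_
    rw [ae_restrict_iff' hSmeas]
    filter_upwards with x hx
    have hb := hkey x hx
    have hnnL : 0 ≤ u (x - y) ^ 2 * (chiFun ‖x‖ * ‖x‖) := by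
      apply mul_nonneg (sq_nonneg _)
      apply mul_nonneg _ (norm_nonneg x)
      rw [chiFun]; split_ifs with h
      · norm_num
      · positivity
    rw [Real.norm_eq_abs, abs_of_nonneg hnnL]
    exact hb
  calc (∫ x in S, u (x - y) ^ 2 * (chiFun ‖x‖ * ‖x‖))
      ≤ ∫ x in S, F (x - y) := setIntegral_mono_on hLint hFy.integrableOn hSmeas hkey
    _ ≤ ∫ x, F (x - y) := setIntegral_le_integral hFy (Eventually.of_forall fun x => hFnn _)
    _ = ∫ z, F z := integral_sub_right_eq_self F y
    _ ≤ ∫ z in (ball (0 : EuclideanSpace ℝ (Fin N)) n)ᶜ, g z := by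
        rw [hF, integral_indicator hTmeas]
        apply setIntegral_mono_set hgint.integrableOn (Eventually.of_forall hgnn)
        refine HasSubset.Subset.eventuallyLE ?_
        intro z hz
        rw [Set.mem_compl_iff, mem_ball, dist_zero_right, not_lt]
        exact le_trans hyn hz
    _ < ε := hcompl


end
end
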